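/- arXiv:2011.09725 — 2 statements merged into one kernel-verified Lean document; each statement's English description precedes it below -/
import Mathlib

section
/- Let f ∈ L²(μ₁), g ∈ L²(μ₂), h ∈ L²(μ₃) with f ≠ 0 and g ≠ 0, and let F = f ⊗ g ⊗ h ∈ L²(μ₁ × μ₂ × μ₃). Set u₁ = f / ‖f‖, F¹(x₂,x₃) = ∫ F u₁(x₁) dμ₁(x₁), u₂ = g / ‖g‖, and F²(x₃) = ∫ F¹ u₂(x₂) dμ₂(x₂). Then F¹ = ‖f‖ · (g ⊗ h) in L²(μ₂ × μ₃), F² = ‖f‖‖g‖ · h in L²(μ₃), and u₁ ⊗ u₂ ⊗ F² = F in L²(μ₁ × μ₂ × μ₃), i.e. a single CP-TT sweep recovers a rank-one tensor exactly. -/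
open MeasureTheory

lemma sq_integral_pos {Ω : Type*} [MeasurableSpace Ω] (μ : Measure Ω)
    (f : Ω → ℝ) (hf : MemLp f 2 μ) (hf0 : ¬ (f =ᵐ[μ] (0 : Ω → ℝ))) :
    0 < ∫ x, (f x) ^ 2 ∂μ := by
  have hint : Integrable (fun x => (f x) ^ 2) μ := by
    have := hf.integrable_sq
    simpa [sq] using this
  have hnn : 0 ≤ ∫ x, (f x) ^ 2 ∂μ :=
    integral_nonneg fun x => sq_nonneg _
  rcases hnn.lt_or_eq with hlt | heq
  · exact hlt
  · exfalso
    have h0 : (fun x => (f x) ^ 2) =ᵐ[μ] 0 :=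
      (integral_eq_zero_iff_of_nonneg (fun x => sq_nonneg _) hint).mp heq.symm
    apply hf0
    filter_upwards [h0] with x hx
    have : (f x) ^ 2 = 0 := hx
    simpa using pow_eq_zero_iff (n := 2) (by norm_num) |>.mp this

/-- A single CP-TT sweep recovers a rank-one third-order tensor
`F = f ⊗ g ⊗ h` exactly: `F¹ = ‖f‖ (g ⊗ h)`, `F² = ‖f‖‖g‖ h`, and
`u₁ ⊗ u₂ ⊗ F² = F` in the respective `L²` spaces. -/
theorem stmt10 {Ω₁ Ω₂ Ω₃ : Type*}
    [MeasurableSpace Ω₁] [MeasurableSpace Ω₂] [MeasurableSpace Ω₃]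
    (μ₁ : Measure Ω₁) (μ₂ : Measure Ω₂) (μ₃ : Measure Ω₃)
    [SigmaFinite μ₁] [SigmaFinite μ₂] [SigmaFinite μ₃]
    (f : Ω₁ → ℝ) (hf : MemLp f 2 μ₁) (hf0 : ¬ (f =ᵐ[μ₁] (0 : Ω₁ → ℝ)))
    (g : Ω₂ → ℝ) (hg : MemLp g 2 μ₂) (hg0 : ¬ (g =ᵐ[μ₂] (0 : Ω₂ → ℝ)))
    (h : Ω₃ → ℝ) (hh : MemLp h 2 μ₃)
    (F : Ω₁ × Ω₂ × Ω₃ → ℝ) (hF : ∀ z, F z = f z.1 * g z.2.1 * h z.2.2)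
    (nf : ℝ) (hnf : nf = Real.sqrt (∫ x, (f x) ^ 2 ∂μ₁))
    (ng : ℝ) (hng : ng = Real.sqrt (∫ x, (g x) ^ 2 ∂μ₂))
    (u₁ : Ω₁ → ℝ) (hu₁ : ∀ x, u₁ x = f x / nf)
    (F₁ : Ω₂ × Ω₃ → ℝ) (hF₁ : ∀ p, F₁ p = ∫ x₁, F (x₁, p) * u₁ x₁ ∂μ₁)
    (u₂ : Ω₂ → ℝ) (hu₂ : ∀ x, u₂ x = g x / ng)
    (F₂ : Ω₃ → ℝ) (hF₂ : ∀ x₃, F₂ x₃ = ∫ x₂, F₁ (x₂, x₃) * u₂ x₂ ∂μ₂) :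
    (F₁ =ᵐ[μ₂.prod μ₃] fun p => nf * (g p.1 * h p.2)) ∧
    (F₂ =ᵐ[μ₃] fun x₃ => nf * ng * h x₃) ∧
    ((fun z : Ω₁ × Ω₂ × Ω₃ => u₁ z.1 * u₂ z.2.1 * F₂ z.2.2)
        =ᵐ[μ₁.prod (μ₂.prod μ₃)] F) := by
  have hIf : 0 < ∫ x, (f x) ^ 2 ∂μ₁ := sq_integral_pos μ₁ f hf hf0
  have hIg : 0 < ∫ x, (g x) ^ 2 ∂μ₂ := sq_integral_pos μ₂ g hg hg0
  have hnf0 : 0 < nf := by rw [hnf]; exact Real.sqrt_pos.mpr hIf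
  have hng0 : 0 < ng := by rw [hng]; exact Real.sqrt_pos.mpr hIg
  have hnfsq : nf ^ 2 = ∫ x, (f x) ^ 2 ∂μ₁ := by
    rw [hnf, Real.sq_sqrt hIf.le]
  have hngsq : ng ^ 2 = ∫ x, (g x) ^ 2 ∂μ₂ := by
    rw [hng, Real.sq_sqrt hIg.le]
  -- F₁ is pointwise equal to nf * (g ⊗ h)
  have hF₁' : ∀ p : Ω₂ × Ω₃, F₁ p = nf * (g p.1 * h p.2) := by
    intro p
    rw [hF₁]
    have : ∀ x₁, F (x₁, p) * u₁ x₁ = (g p.1 * h p.2 / nf) * (f x₁) ^ 2 := by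
      intro x₁
      rw [hF, hu₁]
      ring
    simp_rw [this]
    rw [integral_const_mul, ← hnfsq]
    field_simp
  -- F₂ is pointwise equal to nf * ng * h
  have hF₂' : ∀ x₃, F₂ x₃ = nf * ng * h x₃ := by
    intro x₃
    rw [hF₂]
    have : ∀ x₂, F₁ (x₂, x₃) * u₂ x₂ = (nf * h x₃ / ng) * (g x₂) ^ 2 := by
      intro x₂
      rw [hF₁' (x₂, x₃), hu₂]
      ring
    simp_rw [this]
    rw [integral_const_mul, ← hngsq]
    field_simp
  refine ⟨Filter.Eventually.of_forall fun p => hF₁' p,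
    Filter.Eventually.of_forall fun x₃ => hF₂' x₃,
    Filter.Eventually.of_forall fun z => ?_⟩
  show u₁ z.1 * u₂ z.2.1 * F₂ z.2.2 = F z
  rw [hu₁, hu₂, hF₂', hF]
  field_simp
end

section
/- Let (u_j)_{j≥1} be an orthonormal family in L²(μ₁), (v_j)_{j≥1} an orthonormal family in L²(μ₂), and (σ_j)_{j≥1} nonnegative reals with ∑_j σ_j² < ∞ and σ₁ ≥ σ_j for all j. Suppose F ∈ L²(μ₁ × μ₂) satisfies F = ∑_{j≥1} σ_j u_j ⊗ v_j, the series converging in L²(μ₁ × μ₂). Then for every a ∈ L²(μ₁) and b ∈ L²(μ₂), ‖F - a ⊗ b‖²_{L²(μ₁ × μ₂)} ≥ ∑_{j≥2} σ_j² = ‖F - σ₁ u₁ ⊗ v₁‖²_{L²(μ₁ × μ₂)}; i.e. the top singular pair gives a best rank-one approximation of F. -/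
open MeasureTheory Filter
open scoped RealInnerProductSpace

private theorem auxInnerL2 {Ω : Type*} [MeasurableSpace Ω] {μ : Measure Ω} (f g : Lp ℝ 2 μ) :
    ⟪f, g⟫ = ∫ x, f x * g x ∂μ := by
  rw [L2.inner_def]; simp [RCLike.inner_apply, mul_comm]

private theorem auxNormL2 {Ω : Type*} [MeasurableSpace Ω] {μ : Measure Ω} (x : Lp ℝ 2 μ) :
    ∫ a, (x a) ^ 2 ∂μ = ‖x‖ ^ 2 := by
  rw [← real_inner_self_eq_norm_sq, L2.inner_def]
  simp [RCLike.inner_apply, sq]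

private theorem auxInnerToLp {Ω : Type*} [MeasurableSpace Ω] {μ : Measure Ω}
    {f g : Ω → ℝ} (hf : MemLp f 2 μ) (hg : MemLp g 2 μ) :
    ⟪hf.toLp f, hg.toLp g⟫ = ∫ x, f x * g x ∂μ := by
  rw [L2.inner_def]
  refine integral_congr_ae ?_
  filter_upwards [hf.coeFn_toLp, hg.coeFn_toLp] with x h1 h2
  simp [RCLike.inner_apply, h1, h2, mul_comm]

private theorem auxNormToLp {Ω : Type*} [MeasurableSpace Ω] {μ : Measure Ω}
    {f : Ω → ℝ} (hf : MemLp f 2 μ) :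
    ∫ x, f x ^ 2 ∂μ = ‖hf.toLp f‖ ^ 2 := by
  rw [← real_inner_self_eq_norm_sq, auxInnerToLp hf hf]
  simp [sq]

private theorem auxTensorMem {Ω₁ Ω₂ : Type*} [MeasurableSpace Ω₁] [MeasurableSpace Ω₂]
    {μ₁ : Measure Ω₁} {μ₂ : Measure Ω₂} [SigmaFinite μ₁] [SigmaFinite μ₂]
    {a : Ω₁ → ℝ} {b : Ω₂ → ℝ} (ha : MemLp a 2 μ₁) (hb : MemLp b 2 μ₂) :
    MemLp (fun z : Ω₁ × Ω₂ => a z.1 * b z.2) 2 (μ₁.prod μ₂) := by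
  have hma : AEStronglyMeasurable (fun z : Ω₁ × Ω₂ => a z.1) (μ₁.prod μ₂) := ha.1.comp_fst
  have hmb : AEStronglyMeasurable (fun z : Ω₁ × Ω₂ => b z.2) (μ₁.prod μ₂) := hb.1.comp_snd
  rw [memLp_two_iff_integrable_sq (by exact hma.mul hmb)]
  have : (fun z : Ω₁ × Ω₂ => (a z.1 * b z.2) ^ 2)
      = fun z : Ω₁ × Ω₂ => (a z.1 ^ 2) * (b z.2 ^ 2) := by
    funext z; ring
  rw [this]
  exact Integrable.mul_prod ((memLp_two_iff_integrable_sq ha.1).mp ha)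
    ((memLp_two_iff_integrable_sq hb.1).mp hb)

private theorem auxCoeSum {Ω : Type*} [MeasurableSpace Ω] {μ : Measure Ω} {ι : Type*}
    (s : Finset ι) (f : ι → Lp ℝ 2 μ) :
    ⇑(∑ i ∈ s, f i) =ᵐ[μ] fun x => ∑ i ∈ s, f i x := by
  classical
  induction s using Finset.induction_on with
  | empty => simp only [Finset.sum_empty]; exact Lp.coeFn_zero ℝ 2 μ
  | insert i s hnotmem ih =>
    rw [Finset.sum_insert hnotmem]
    filter_upwards [Lp.coeFn_add (f i) (∑ j ∈ s, f j), ih] with x h1 h2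
    rw [Finset.sum_insert hnotmem, h1, Pi.add_apply, h2]

set_option maxHeartbeats 1000000 in
/-- Under the assumptions of Statement 11, if moreover
`σ₁ ≥ σ_j` for all `j`, then for every `a ∈ L²(μ₁)`, `b ∈ L²(μ₂)`,
`‖F - a ⊗ b‖² ≥ ∑_{j≥2} σ_j² = ‖F - σ₁ u₁ ⊗ v₁‖²`: the top singular pair
gives a best rank-one approximation. (Indices shifted so `j = 0` is first.) -/
theorem stmt12 {Ω₁ Ω₂ : Type*} [MeasurableSpace Ω₁] [MeasurableSpace Ω₂]
    (μ₁ : Measure Ω₁) (μ₂ : Measure Ω₂) [SigmaFinite μ₁] [SigmaFinite μ₂]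
    (u : ℕ → Ω₁ → ℝ) (hu : ∀ j, MemLp (u j) 2 μ₁)
    (huo : ∀ i j, ∫ x, u i x * u j x ∂μ₁ = if i = j then 1 else 0)
    (v : ℕ → Ω₂ → ℝ) (hv : ∀ j, MemLp (v j) 2 μ₂)
    (hvo : ∀ i j, ∫ y, v i y * v j y ∂μ₂ = if i = j then 1 else 0)
    (σ : ℕ → ℝ) (hσ : ∀ j, 0 ≤ σ j) (hσs : Summable fun j => (σ j) ^ 2)
    (hσtop : ∀ j, σ j ≤ σ 0)
    (F : Ω₁ × Ω₂ → ℝ) (hF : MemLp F 2 (μ₁.prod μ₂))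
    (hconv : Tendsto
      (fun n => ∫ z, (F z - ∑ j ∈ Finset.range n, σ j * u j z.1 * v j z.2) ^ 2
        ∂(μ₁.prod μ₂)) atTop (nhds 0)) :
    (∀ (a : Ω₁ → ℝ) (b : Ω₂ → ℝ), MemLp a 2 μ₁ → MemLp b 2 μ₂ →
      (∑' j : ℕ, (σ (j + 1)) ^ 2)
        ≤ ∫ z, (F z - a z.1 * b z.2) ^ 2 ∂(μ₁.prod μ₂)) ∧
    (∑' j : ℕ, (σ (j + 1)) ^ 2)
      = ∫ z, (F z - σ 0 * u 0 z.1 * v 0 z.2) ^ 2 ∂(μ₁.prod μ₂) := by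
  classical
  -- tensor functions and their Lp versions
  have hten : ∀ j, MemLp (fun z : Ω₁ × Ω₂ => u j z.1 * v j z.2) 2 (μ₁.prod μ₂) :=
    fun j => auxTensorMem (hu j) (hv j)
  set e : ℕ → Lp ℝ 2 (μ₁.prod μ₂) := fun j => (hten j).toLp _ with he_def
  -- orthonormality of e
  have he : Orthonormal ℝ e := by
    rw [orthonormal_iff_ite]
    intro i j
    rw [auxInnerToLp (hten i) (hten j)]
    have h1 : (fun z : Ω₁ × Ω₂ => (u i z.1 * v i z.2) * (u j z.1 * v j z.2))
        = fun z : Ω₁ × Ω₂ => (u i z.1 * u j z.1) * (v i z.2 * v j z.2) := by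
      funext z; ring
    calc ∫ z, (u i z.1 * v i z.2) * (u j z.1 * v j z.2) ∂(μ₁.prod μ₂)
        = (∫ x, u i x * u j x ∂μ₁) * ∫ y, v i y * v j y ∂μ₂ := by
          rw [h1]
          exact integral_prod_mul (L := ℝ) (fun x => u i x * u j x) (fun y => v i y * v j y)
      _ = if i = j then 1 else 0 := by rw [huo, hvo]; split <;> norm_num
  set fL : Lp ℝ 2 (μ₁.prod μ₂) := hF.toLp F with hfL_def
  set P : ℕ → Lp ℝ 2 (μ₁.prod μ₂) := fun n => ∑ j ∈ Finset.range n, σ j • e j with hP_def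
  -- the key integral identity
  have hkey : ∀ (G : Ω₁ × Ω₂ → ℝ) (hG : MemLp G 2 (μ₁.prod μ₂)),
      ∫ z, (F z - G z) ^ 2 ∂(μ₁.prod μ₂) = ‖fL - hG.toLp G‖ ^ 2 := by
    intro G hG
    rw [← auxNormL2 (fL - hG.toLp G)]
    refine integral_congr_ae ?_
    filter_upwards [Lp.coeFn_sub fL (hG.toLp G), hF.coeFn_toLp, hG.coeFn_toLp]
      with z h1 h2 h3
    rw [h1, Pi.sub_apply, h2, h3]
  -- coe of P n
  have hPcoe : ∀ n, ⇑(P n) =ᵐ[μ₁.prod μ₂]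
      fun z => ∑ j ∈ Finset.range n, σ j * u j z.1 * v j z.2 := by
    intro n
    have h1 := auxCoeSum (Finset.range n) (fun j => σ j • e j)
    have h2 : ∀ j, ⇑(σ j • e j) =ᵐ[μ₁.prod μ₂] fun z => σ j * u j z.1 * v j z.2 := by
      intro j
      filter_upwards [Lp.coeFn_smul (σ j) (e j), (hten j).coeFn_toLp] with z hz1 hz2
      rw [hz1, Pi.smul_apply, hz2, smul_eq_mul, mul_assoc]
    have h3 : ∀ᵐ z ∂(μ₁.prod μ₂), ∀ j ∈ Finset.range n,
        (σ j • e j) z = σ j * u j z.1 * v j z.2 :=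
      (ae_ball_iff (Finset.range n).countable_toSet).mpr fun j _ => h2 j
    filter_upwards [h1, h3] with z hz1 hz3
    rw [hz1]
    exact Finset.sum_congr rfl fun j hj => hz3 j hj
  -- convergence of P n to fL
  have hPF : ∀ n, ∫ z, (F z - ∑ j ∈ Finset.range n, σ j * u j z.1 * v j z.2) ^ 2
      ∂(μ₁.prod μ₂) = ‖fL - P n‖ ^ 2 := by
    intro n
    rw [← auxNormL2 (fL - P n)]
    refine integral_congr_ae ?_
    filter_upwards [Lp.coeFn_sub fL (P n), hF.coeFn_toLp, hPcoe n] with z h1 h2 h3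
    rw [h1, Pi.sub_apply, h2, h3]
  have htend2 : Tendsto (fun n => ‖fL - P n‖ ^ 2) atTop (nhds 0) := by
    simpa only [hPF] using hconv
  have htend1 : Tendsto (fun n => ‖fL - P n‖) atTop (nhds 0) := by
    have h := (Real.continuous_sqrt.tendsto 0).comp htend2
    rw [Real.sqrt_zero] at h
    exact h.congr fun n => Real.sqrt_sq (norm_nonneg _)
  have hPtend : Tendsto P atTop (nhds fL) := by
    rw [tendsto_iff_norm_sub_tendsto_zero]
    simpa [norm_sub_rev] using htend1
  -- Parseval: ‖fL‖² = ∑' σ²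
  have hPnorm : ∀ n, ‖P n‖ ^ 2 = ∑ j ∈ Finset.range n, σ j ^ 2 := by
    intro n
    rw [← real_inner_self_eq_norm_sq]
    simp only [hP_def]
    rw [he.inner_sum]
    refine Finset.sum_congr rfl fun j _ => ?_
    simp [starRingEnd_apply, sq]
  have hnormF : ‖fL‖ ^ 2 = ∑' j, σ j ^ 2 := by
    have h1 : Tendsto (fun n => ‖P n‖ ^ 2) atTop (nhds (‖fL‖ ^ 2)) :=
      ((continuous_pow 2).tendsto _).comp ((continuous_norm.tendsto _).comp hPtend)
    have h2 : Tendsto (fun n => ‖P n‖ ^ 2) atTop (nhds (∑' j, σ j ^ 2)) := by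
      simpa only [hPnorm] using hσs.hasSum.tendsto_sum_nat
    exact tendsto_nhds_unique h1 h2
  -- coefficients of fL
  have hcoef : ∀ k, ⟪e k, fL⟫ = σ k := by
    intro k
    have h1 : Tendsto (fun n => ⟪e k, P n⟫) atTop (nhds ⟪e k, fL⟫) :=
      (Tendsto.inner tendsto_const_nhds hPtend)
    have h2 : ∀ᶠ n in atTop, ⟪e k, P n⟫ = σ k := by
      filter_upwards [eventually_ge_atTop (k + 1)] with n hn
      exact he.inner_right_sum σ (Finset.mem_range.mpr hn)
    exact tendsto_nhds_unique (h1.congr' (by filter_upwards [h2] with n hn; rw [hn]))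
      tendsto_const_nhds
  -- summability of tail
  have htail : Summable fun j => σ (j + 1) ^ 2 := by
    exact (summable_nat_add_iff 1).mpr hσs
  have htsum : ∑' j, σ j ^ 2 = σ 0 ^ 2 + ∑' j, σ (j + 1) ^ 2 := Summable.tsum_eq_zero_add hσs
  constructor
  · -- part 1
    intro a b ha hb
    set aL := ha.toLp a with haL
    set bL := hb.toLp b with hbL
    have hab := auxTensorMem ha hb
    set abL := hab.toLp _ with habL
    set α : ℕ → ℝ := fun j => ∫ x, u j x * a x ∂μ₁ with hα
    set β : ℕ → ℝ := fun j => ∫ y, v j y * b y ∂μ₂ with hβ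
    -- inner products of e j with abL
    have hip : ∀ j, ⟪e j, abL⟫ = α j * β j := by
      intro j
      rw [auxInnerToLp (hten j) hab]
      have h1 : (fun z : Ω₁ × Ω₂ => (u j z.1 * v j z.2) * (a z.1 * b z.2))
          = fun z : Ω₁ × Ω₂ => (u j z.1 * a z.1) * (v j z.2 * b z.2) := by
        funext z; ring
      rw [h1]
      exact integral_prod_mul (L := ℝ) (fun x => u j x * a x) (fun y => v j y * b y)
    -- orthonormal families in the factor spaces
    have hUo : Orthonormal ℝ (fun j => (hu j).toLp (u j)) := by
      rw [orthonormal_iff_ite]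
      intro i j
      rw [auxInnerToLp (hu i) (hu j), huo]
    have hVo : Orthonormal ℝ (fun j => (hv j).toLp (v j)) := by
      rw [orthonormal_iff_ite]
      intro i j
      rw [auxInnerToLp (hv i) (hv j), hvo]
    have hαa : ∀ j, α j = ⟪(hu j).toLp (u j), aL⟫ := fun j => (auxInnerToLp (hu j) ha).symm
    have hβb : ∀ j, β j = ⟪(hv j).toLp (v j), bL⟫ := fun j => (auxInnerToLp (hv j) hb).symm
    -- Bessel
    have hBesselA : ∀ n, ∑ j ∈ Finset.range n, α j ^ 2 ≤ ‖aL‖ ^ 2 := by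
      intro n
      have h := hUo.sum_inner_products_le (s := Finset.range n) aL
      refine le_trans (le_of_eq ?_) h
      refine Finset.sum_congr rfl fun j _ => ?_
      rw [hαa j, Real.norm_eq_abs, sq_abs]
    have hBesselB : ∀ n, ∑ j ∈ Finset.range n, β j ^ 2 ≤ ‖bL‖ ^ 2 := by
      intro n
      have h := hVo.sum_inner_products_le (s := Finset.range n) bL
      refine le_trans (le_of_eq ?_) h
      refine Finset.sum_congr rfl fun j _ => ?_
      rw [hβb j, Real.norm_eq_abs, sq_abs]
    -- bound on partial sums
    have hbound : ∀ n, |∑ j ∈ Finset.range n, σ j * (α j * β j)| ≤ σ 0 * (‖aL‖ * ‖bL‖) := by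
      intro n
      have h1 : |∑ j ∈ Finset.range n, σ j * (α j * β j)|
          ≤ ∑ j ∈ Finset.range n, σ j * (|α j| * |β j|) := by
        refine le_trans (Finset.abs_sum_le_sum_abs _ _) ?_
        refine Finset.sum_le_sum fun j _ => ?_
        rw [abs_mul, abs_mul, abs_of_nonneg (hσ j)]
      have h2 : ∑ j ∈ Finset.range n, σ j * (|α j| * |β j|)
          ≤ σ 0 * ∑ j ∈ Finset.range n, |α j| * |β j| := by
        rw [Finset.mul_sum]
        refine Finset.sum_le_sum fun j _ => ?_
        exact mul_le_mul_of_nonneg_right (hσtop j) (by positivity)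
      have h3 : ∑ j ∈ Finset.range n, |α j| * |β j| ≤ ‖aL‖ * ‖bL‖ := by
        have hcs := Finset.sum_mul_sq_le_sq_mul_sq (Finset.range n)
          (fun j => |α j|) (fun j => |β j|)
        have h4 : (∑ j ∈ Finset.range n, |α j| * |β j|) ^ 2
            ≤ (‖aL‖ * ‖bL‖) ^ 2 := by
          rw [mul_pow]
          refine le_trans hcs ?_
          refine mul_le_mul ?_ ?_ ?_ (by positivity)
          · simpa [sq_abs] using hBesselA n
          · simpa [sq_abs] using hBesselB n
          · positivity
        have h5 : (0:ℝ) ≤ ∑ j ∈ Finset.range n, |α j| * |β j| := by positivity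
        have h6 : (0:ℝ) ≤ ‖aL‖ * ‖bL‖ := by positivity
        nlinarith [h4, h5, h6]
      calc |∑ j ∈ Finset.range n, σ j * (α j * β j)|
          ≤ σ 0 * ∑ j ∈ Finset.range n, |α j| * |β j| := le_trans h1 h2
        _ ≤ σ 0 * (‖aL‖ * ‖bL‖) :=
            mul_le_mul_of_nonneg_left h3 (hσ 0)
    -- ⟪fL, abL⟫ ≤ σ 0 * ‖aL‖ * ‖bL‖
    have hPin : ∀ n, ⟪P n, abL⟫ = ∑ j ∈ Finset.range n, σ j * (α j * β j) := by
      intro n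
      rw [hP_def, sum_inner]
      refine Finset.sum_congr rfl fun j _ => ?_
      rw [real_inner_smul_left, hip j]
    have hinnerF : ⟪fL, abL⟫ ≤ σ 0 * (‖aL‖ * ‖bL‖) := by
      have h1 : Tendsto (fun n => ⟪P n, abL⟫) atTop (nhds ⟪fL, abL⟫) :=
        Tendsto.inner hPtend tendsto_const_nhds
      refine le_of_tendsto h1 ?_
      filter_upwards with n
      rw [hPin n]
      exact le_trans (le_abs_self _) (hbound n)
    -- norm of abL
    have habnorm : ‖abL‖ ^ 2 = (‖aL‖ * ‖bL‖) ^ 2 := by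
      rw [← auxNormToLp hab, mul_pow, ← auxNormToLp ha, ← auxNormToLp hb]
      have h1 : (fun z : Ω₁ × Ω₂ => (a z.1 * b z.2) ^ 2)
          = fun z : Ω₁ × Ω₂ => (a z.1 ^ 2) * (b z.2 ^ 2) := by
        funext z; ring
      rw [h1]
      exact integral_prod_mul (L := ℝ) (fun x => a x ^ 2) (fun y => b y ^ 2)
    -- conclude
    rw [hkey _ hab]
    have hexp : ‖fL - abL‖ ^ 2 = ‖fL‖ ^ 2 - 2 * ⟪fL, abL⟫ + ‖abL‖ ^ 2 :=
      norm_sub_sq_real fL abL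
    set t := ‖aL‖ * ‖bL‖ with ht
    have ht0 : 0 ≤ t := by positivity
    have : ∑' j, σ (j + 1) ^ 2 ≤ ∑' j, σ j ^ 2 - 2 * (σ 0 * t) + t ^ 2 := by
      rw [htsum]; nlinarith [sq_nonneg (σ 0 - t)]
    refine le_trans this ?_
    rw [hexp, hnormF, habnorm]
    nlinarith [hinnerF]
  · -- part 2 : equality for the top singular pair
    have hq : ∫ z, (F z - σ 0 * u 0 z.1 * v 0 z.2) ^ 2 ∂(μ₁.prod μ₂)
        = ‖fL - σ 0 • e 0‖ ^ 2 := by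
      rw [← auxNormL2 (fL - σ 0 • e 0)]
      refine integral_congr_ae ?_
      filter_upwards [Lp.coeFn_sub fL (σ 0 • e 0), hF.coeFn_toLp,
        Lp.coeFn_smul (σ 0) (e 0), (hten 0).coeFn_toLp] with z h1 h2 h3 h4
      rw [h1, Pi.sub_apply, h2, h3, Pi.smul_apply, h4, smul_eq_mul, mul_assoc]
    rw [hq, norm_sub_sq_real, hnormF]
    have h5 : ⟪fL, σ 0 • e 0⟫ = σ 0 * σ 0 := by
      rw [real_inner_smul_right, real_inner_comm, hcoef 0]
    have h6 : ‖σ 0 • e 0‖ ^ 2 = σ 0 ^ 2 := by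
      rw [norm_smul, mul_pow, he.1 0, one_pow, Real.norm_eq_abs, sq_abs, mul_one]
    rw [h5, h6, htsum]
    ring
end
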